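/- Let n, r be natural numbers, H : ℝ^{2n} × ℝ^r → ℝ a C² function, and R : ℝ^r → Matrix (Fin r) (Fin r) ℝ a C¹ map whose values are antisymmetric matrices and with R(0) = 0. Let J be the 2n×2n block matrix [[0, Iₙ],[−Iₙ, 0]]. Define the vector field X : ℝ^{2n} × ℝ^r → ℝ^{2n} × ℝ^r by X(x,z) = (J · ∇ₓH(x,z), R(z) · ∇_zH(x,z)), where ∇ₓH and ∇_zH denote the vectors of partial derivatives of H with respect to the first 2n and last r coordinates. Assume ∇ₓH(0,0) = 0 (so X(0,0) = 0, i.e. the origin is an equilibrium). Then the Fréchet derivative of X at (0,0) is the linear map (u,w) ↦ (S·u + Q·w, P·w), where S = J · (∂²H/∂x∂x)(0,0), Q = J · (∂²H/∂x∂z)(0,0), and P is the r×r matrix with entries P_{k,l} = Σ_{p=1}^{r} (∂R_{k,p}/∂z_l)(0) · (∂H/∂z_p)(0,0). -/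

import Mathlib

open Matrix

lemma clm_pi_expand {κ : Type*} [Fintype κ] [DecidableEq κ]
    (C : (κ → ℝ) →L[ℝ] ℝ) (w : κ → ℝ) :
    C w = ∑ l, w l * C (Pi.single l 1) := by
  have hw : w = ∑ l, w l • (Pi.single l 1 : κ → ℝ) := by
    ext j
    simp [Finset.sum_apply, Pi.single_apply]
  conv_lhs => rw [hw]
  rw [map_sum]
  refine Finset.sum_congr rfl fun l _ => ?_
  rw [ContinuousLinearMap.map_smul, smul_eq_mul]

lemma clm_prod_expand {ι κ : Type*} [Fintype ι] [Fintype κ] [DecidableEq ι] [DecidableEq κ]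
    (T : ((ι → ℝ) × (κ → ℝ)) →L[ℝ] ℝ) (u : ι → ℝ) (w : κ → ℝ) :
    T (u, w) = (∑ q, u q * T (Pi.single q 1, 0)) + ∑ l, w l * T (0, Pi.single l 1) := by
  have hdecomp : (u, w) = ((∑ q, u q • ((Pi.single q 1 : ι → ℝ), (0 : κ → ℝ)))
      + ∑ l, w l • ((0 : ι → ℝ), (Pi.single l 1 : κ → ℝ))) := by
    apply Prod.ext
    · simp only [Prod.fst_add, Prod.fst_sum, Prod.smul_fst, smul_zero, Finset.sum_const_zero,
        add_zero]
      ext j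
      simp [Finset.sum_apply, Pi.single_apply]
    · simp only [Prod.snd_add, Prod.snd_sum, Prod.smul_snd, smul_zero, Finset.sum_const_zero,
        zero_add]
      ext j
      simp [Finset.sum_apply, Pi.single_apply]
  conv_lhs => rw [hdecomp]
  rw [map_add, map_sum, map_sum]
  congr 1
  · exact Finset.sum_congr rfl fun q _ => by rw [ContinuousLinearMap.map_smul, smul_eq_mul]
  · exact Finset.sum_congr rfl fun l _ => by rw [ContinuousLinearMap.map_smul, smul_eq_mul]

theorem stmt_0 (n r : ℕ)
    (H : (((Fin n ⊕ Fin n) → ℝ) × (Fin r → ℝ)) → ℝ)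
    (hH : ContDiff ℝ 2 H)
    (R : (Fin r → ℝ) → Fin r → Fin r → ℝ)
    (hR : ContDiff ℝ 1 R)
    (hRanti : ∀ z k l, R z k l = -R z l k)
    (hR0 : R 0 = 0)
    (J : (Fin n ⊕ Fin n) → (Fin n ⊕ Fin n) → ℝ)
    (hJ : ∀ i q, J i q =
      Matrix.fromBlocks (0 : Matrix (Fin n) (Fin n) ℝ) (1 : Matrix (Fin n) (Fin n) ℝ)
        (-1 : Matrix (Fin n) (Fin n) ℝ) (0 : Matrix (Fin n) (Fin n) ℝ) i q)
    (gradx : (((Fin n ⊕ Fin n) → ℝ) × (Fin r → ℝ)) → ((Fin n ⊕ Fin n) → ℝ))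
    (hgradx : ∀ p i, gradx p i = fderiv ℝ H p (Pi.single i 1, 0))
    (gradz : (((Fin n ⊕ Fin n) → ℝ) × (Fin r → ℝ)) → (Fin r → ℝ))
    (hgradz : ∀ p k, gradz p k = fderiv ℝ H p (0, Pi.single k 1))
    (X : (((Fin n ⊕ Fin n) → ℝ) × (Fin r → ℝ)) →
      (((Fin n ⊕ Fin n) → ℝ) × (Fin r → ℝ)))
    (hX : ∀ p, X p =
      (fun i => ∑ q, J i q * gradx p q, fun k => ∑ q, R p.2 k q * gradz p q))
    (heq : gradx (0, 0) = 0)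
    (S : (Fin n ⊕ Fin n) → (Fin n ⊕ Fin n) → ℝ)
    (hS : ∀ i j, S i j =
      ∑ p, J i p * fderiv ℝ (fun q => gradx q p) (0, 0) (Pi.single j 1, 0))
    (Q : (Fin n ⊕ Fin n) → Fin r → ℝ)
    (hQ : ∀ i l, Q i l =
      ∑ p, J i p * fderiv ℝ (fun q => gradx q p) (0, 0) (0, Pi.single l 1))
    (P : Fin r → Fin r → ℝ)
    (hP : ∀ k l, P k l =
      ∑ p, fderiv ℝ (fun z => R z k p) 0 (Pi.single l 1) * gradz (0, 0) p) :
    ∃ L : (((Fin n ⊕ Fin n) → ℝ) × (Fin r → ℝ)) →L[ℝ]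
        (((Fin n ⊕ Fin n) → ℝ) × (Fin r → ℝ)),
      HasFDerivAt X L (0, 0) ∧
      ∀ (u : (Fin n ⊕ Fin n) → ℝ) (w : Fin r → ℝ),
        L (u, w) = (fun i => (∑ q, S i q * u q) + ∑ l, Q i l * w l,
          fun k => ∑ l, P k l * w l) := by
  classical
  -- second derivative of H
  have hG : ContDiff ℝ 1 (fderiv ℝ H) := hH.fderiv_right (by norm_num)
  set A : (((Fin n ⊕ Fin n) → ℝ) × (Fin r → ℝ)) →L[ℝ]
      ((((Fin n ⊕ Fin n) → ℝ) × (Fin r → ℝ)) →L[ℝ] ℝ) := fderiv ℝ (fderiv ℝ H) (0, 0) with hAdef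
  have hA : HasFDerivAt (fderiv ℝ H) A (0, 0) :=
    ((hG.differentiable one_ne_zero) (0, 0)).hasFDerivAt
  have hEv : ∀ v : (((Fin n ⊕ Fin n) → ℝ) × (Fin r → ℝ)),
      HasFDerivAt (fun p => fderiv ℝ H p v)
      ((ContinuousLinearMap.apply ℝ ℝ v).comp A) (0, 0) := fun v =>
    ((ContinuousLinearMap.apply ℝ ℝ v).hasFDerivAt).comp (0, 0) hA
  -- derivatives of gradx/gradz coordinates
  have hDx : ∀ q, HasFDerivAt (fun p => gradx p q)
      ((ContinuousLinearMap.apply ℝ ℝ ((Pi.single q 1 : (Fin n ⊕ Fin n) → ℝ),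
        (0 : Fin r → ℝ))).comp A) (0, 0) := by
    intro q
    have h : (fun p => gradx p q)
        = fun p => fderiv ℝ H p ((Pi.single q 1 : (Fin n ⊕ Fin n) → ℝ), (0 : Fin r → ℝ)) :=
      funext fun p => hgradx p q
    rw [h]; exact hEv _
  have hDz : ∀ q, HasFDerivAt (fun p => gradz p q)
      ((ContinuousLinearMap.apply ℝ ℝ ((0 : (Fin n ⊕ Fin n) → ℝ),
        (Pi.single q 1 : Fin r → ℝ))).comp A) (0, 0) := by
    intro q
    have h : (fun p => gradz p q)
        = fun p => fderiv ℝ H p ((0 : (Fin n ⊕ Fin n) → ℝ), (Pi.single q 1 : Fin r → ℝ)) :=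
      funext fun p => hgradz p q
    rw [h]; exact hEv _
  have hfdx : ∀ q, fderiv ℝ (fun p => gradx p q) (0, 0)
      = (ContinuousLinearMap.apply ℝ ℝ ((Pi.single q 1 : (Fin n ⊕ Fin n) → ℝ),
        (0 : Fin r → ℝ))).comp A := fun q => (hDx q).fderiv
  -- derivative of the entries of R
  set C : Fin r → Fin r → ((Fin r → ℝ) →L[ℝ] ℝ) :=
    fun k q => fderiv ℝ (fun z => R z k q) 0 with hCdef
  have hC : ∀ k q, HasFDerivAt (fun z => R z k q) (C k q) 0 := by
    intro k q
    have h1 : HasFDerivAt R (fderiv ℝ R 0) 0 := ((hR.differentiable one_ne_zero) 0).hasFDerivAt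
    have h2 := (ContinuousLinearMap.proj (R := ℝ)
      (φ := fun _ : Fin r => (Fin r → ℝ)) k).hasFDerivAt.comp 0 h1
    have h3 := (ContinuousLinearMap.proj (R := ℝ)
      (φ := fun _ : Fin r => ℝ) q).hasFDerivAt.comp (0 : Fin r → ℝ) h2
    have h4 : DifferentiableAt ℝ (fun z => R z k q) 0 := h3.differentiableAt
    exact h4.hasFDerivAt
  have hRsnd : ∀ k q, HasFDerivAt (fun p : (((Fin n ⊕ Fin n) → ℝ) × (Fin r → ℝ)) => R p.2 k q)
      ((C k q).comp (ContinuousLinearMap.snd ℝ ((Fin n ⊕ Fin n) → ℝ) (Fin r → ℝ))) (0, 0) :=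
    fun k q => (hC k q).comp (g := fun z => R z k q)
      (f := (Prod.snd : (((Fin n ⊕ Fin n) → ℝ) × (Fin r → ℝ)) → (Fin r → ℝ))) (0, 0) hasFDerivAt_snd
  have hR0' : ∀ k q, R (0 : Fin r → ℝ) k q = 0 := by
    intro k q; rw [hR0]; rfl
  -- the linear map
  set Lx : (Fin n ⊕ Fin n) → ((((Fin n ⊕ Fin n) → ℝ) × (Fin r → ℝ)) →L[ℝ] ℝ) := fun i =>
    ∑ q, J i q • ((ContinuousLinearMap.apply ℝ ℝ
      ((Pi.single q 1 : (Fin n ⊕ Fin n) → ℝ), (0 : Fin r → ℝ))).comp A) with hLx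
  set Lz : Fin r → ((((Fin n ⊕ Fin n) → ℝ) × (Fin r → ℝ)) →L[ℝ] ℝ) := fun k =>
    ∑ q, gradz (0, 0) q • ((C k q).comp
      (ContinuousLinearMap.snd ℝ ((Fin n ⊕ Fin n) → ℝ) (Fin r → ℝ))) with hLz
  refine ⟨(ContinuousLinearMap.pi Lx).prod (ContinuousLinearMap.pi Lz), ?_, ?_⟩
  · have hXeq : X = fun p =>
        (fun i => ∑ q, J i q * gradx p q, fun k => ∑ q, R p.2 k q * gradz p q) :=
      funext hX
    rw [hXeq]
    apply HasFDerivAt.prodMk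
    · apply hasFDerivAt_pi.2
      intro i
      exact HasFDerivAt.fun_sum fun q _ => (hDx q).const_mul (J i q)
    · apply hasFDerivAt_pi.2
      intro k
      have h : Lz k = ∑ q, ((R (((0 : ((Fin n ⊕ Fin n) → ℝ) × (Fin r → ℝ))).2) k q)
          • ((ContinuousLinearMap.apply ℝ ℝ
          ((0 : (Fin n ⊕ Fin n) → ℝ), (Pi.single q 1 : Fin r → ℝ))).comp A)
          + gradz (0, 0) q • ((C k q).comp
            (ContinuousLinearMap.snd ℝ ((Fin n ⊕ Fin n) → ℝ) (Fin r → ℝ)))) := by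
        rw [hLz]
        refine Finset.sum_congr rfl fun q _ => ?_
        have h0 : R ((0 : ((Fin n ⊕ Fin n) → ℝ) × (Fin r → ℝ)).2) k q = 0 := hR0' k q
        rw [h0, zero_smul, zero_add]
      rw [h]
      exact HasFDerivAt.fun_sum fun q _ => (hRsnd k q).mul (hDz q)
  · intro u w
    apply Prod.ext
    · show ContinuousLinearMap.pi Lx (u, w) = _
      funext i
      have hLxval : ContinuousLinearMap.pi Lx (u, w) i
          = ∑ p, J i p * A (u, w) (Pi.single p 1, 0) := by
        simp only [ContinuousLinearMap.pi_apply, hLx, ContinuousLinearMap.sum_apply,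
          ContinuousLinearMap.smul_apply, ContinuousLinearMap.comp_apply,
          ContinuousLinearMap.apply_apply, smul_eq_mul]
      rw [hLxval]
      have hexp : ∀ p : Fin n ⊕ Fin n, A (u, w) ((Pi.single p 1 : (Fin n ⊕ Fin n) → ℝ), 0)
          = (∑ q, u q * A (Pi.single q 1, 0) (Pi.single p 1, 0))
            + ∑ l, w l * A (0, Pi.single l 1) (Pi.single p 1, 0) := by
        intro p
        exact clm_prod_expand ((ContinuousLinearMap.apply ℝ ℝ
          ((Pi.single p 1 : (Fin n ⊕ Fin n) → ℝ), (0 : Fin r → ℝ))).comp A) u w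
      simp_rw [hexp, mul_add, Finset.sum_add_distrib, Finset.mul_sum]
      congr 1
      · rw [Finset.sum_comm]
        refine Finset.sum_congr rfl fun q _ => ?_
        rw [hS]
        simp_rw [hfdx, Finset.sum_mul]
        refine Finset.sum_congr rfl fun p _ => ?_
        simp only [ContinuousLinearMap.comp_apply, ContinuousLinearMap.apply_apply]
        ring
      · rw [Finset.sum_comm]
        refine Finset.sum_congr rfl fun l _ => ?_
        rw [hQ]
        simp_rw [hfdx, Finset.sum_mul]
        refine Finset.sum_congr rfl fun p _ => ?_
        simp only [ContinuousLinearMap.comp_apply, ContinuousLinearMap.apply_apply]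
        ring
    · show ContinuousLinearMap.pi Lz (u, w) = _
      funext k
      have hLzval : ContinuousLinearMap.pi Lz (u, w) k
          = ∑ p, gradz (0, 0) p * (C k p) w := by
        simp only [ContinuousLinearMap.pi_apply, hLz, ContinuousLinearMap.sum_apply,
          ContinuousLinearMap.smul_apply, ContinuousLinearMap.comp_apply,
          smul_eq_mul]
        rfl
      rw [hLzval]
      have hexp : ∀ p, (C k p) w = ∑ l, w l * (C k p) (Pi.single l 1) := fun p =>
        clm_pi_expand (C k p) w
      simp_rw [hexp, Finset.mul_sum]
      rw [Finset.sum_comm]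
      refine Finset.sum_congr rfl fun l _ => ?_
      rw [hP]
      simp_rw [Finset.sum_mul]
      refine Finset.sum_congr rfl fun p _ => ?_
      rw [hCdef]
      ring
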